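/- If b_1,…,b_N and r_1,…,r_N are unit vectors in ℝ³ and w_1,…,w_N are nonnegative reals, then with K the 4×4 Davenport matrix built from B = ∑_n w_n b_n r_nᵀ, σ = tr B, ρ = B + Bᵀ, z = ∑_n w_n (b_n × r_n) (upper-left block ρ − σI, upper-right z, lower-left zᵀ, lower-right σ), every unit vector q ∈ ℝ⁴ satisfies qᵀ K q ≤ ∑_{n=1}^N w_n. In particular the maximum eigenvalue λ_m of K satisfies λ_m ≤ λ_0 := ∑_n w_n, so the TASTE statistic λ_0 − λ_m is nonnegative. -/
import Mathlib


open Matrix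

/-- The attitude profile matrix `B = ∑ wₙ bₙ rₙᵀ`. -/
noncomputable def profileB {N : ℕ} (w : Fin N → ℝ) (b r : Fin N → Fin 3 → ℝ) :
    Matrix (Fin 3) (Fin 3) ℝ :=
  ∑ n, w n • vecMulVec (b n) (r n)

/-- Davenport's `K` matrix: the symmetric 4×4 matrix with upper-left 3×3 block
`ρ − σI`, upper-right column `z`, lower-left row `zᵀ` and lower-right entry `σ`,
where `σ = tr B`, `ρ = B + Bᵀ` and `z = ∑ wₙ (bₙ × rₙ)`. -/
noncomputable def davenportK {N : ℕ} (w : Fin N → ℝ) (b r : Fin N → Fin 3 → ℝ) :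
    Matrix (Fin 3 ⊕ Unit) (Fin 3 ⊕ Unit) ℝ :=
  let B := profileB w b r
  let σ : ℝ := B.trace
  let ρ := B + Bᵀ
  let z : Fin 3 → ℝ := ∑ n, w n • (crossProduct (b n) (r n))
  fromBlocks (ρ - σ • 1) (Matrix.of fun i _ => z i) (Matrix.of fun _ j => z j)
    (Matrix.of fun _ _ => σ)

/-- The single-pair Davenport matrix. -/
noncomputable def davenportK1 (b r : Fin 3 → ℝ) : Matrix (Fin 3 ⊕ Unit) (Fin 3 ⊕ Unit) ℝ :=
  fromBlocks (vecMulVec b r + (vecMulVec b r)ᵀ - (b ⬝ᵥ r) • 1)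
    (Matrix.of fun i _ => crossProduct b r i) (Matrix.of fun _ j => crossProduct b r j)
    (Matrix.of fun _ _ => b ⬝ᵥ r)

set_option maxRecDepth 8000 in
lemma davenportK_eq_sum {N : ℕ} (w : Fin N → ℝ) (b r : Fin N → Fin 3 → ℝ) :
    davenportK w b r = ∑ n, w n • davenportK1 (b n) (r n) := by
  ext i j
  rcases i with i | _ <;> rcases j with j | _
  · simp [davenportK, davenportK1, profileB, fromBlocks, Matrix.sum_apply, Matrix.trace,
      Matrix.diag, vecMulVec_apply, dotProduct, crossProduct, Matrix.one_apply,
      Fin.sum_univ_three, mul_add, mul_sub, add_mul, sub_mul, mul_ite, ite_mul, mul_zero,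
      zero_mul, Finset.sum_add_distrib, Finset.sum_sub_distrib, Finset.sum_ite_irrel,
      Finset.sum_const_zero, mul_comm, mul_left_comm, mul_assoc, smul_eq_mul]
  · simp [davenportK, davenportK1, profileB, fromBlocks, Matrix.sum_apply, Matrix.trace,
      Matrix.diag, vecMulVec_apply, dotProduct, crossProduct, Matrix.one_apply,
      Fin.sum_univ_three, mul_add, mul_sub, add_mul, sub_mul, mul_ite, ite_mul, mul_zero,
      zero_mul, Finset.sum_add_distrib, Finset.sum_sub_distrib, Finset.sum_ite_irrel,
      Finset.sum_const_zero, mul_comm, mul_left_comm, mul_assoc, smul_eq_mul]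
    apply Finset.sum_congr rfl; intro n _
    fin_cases i <;> simp <;> ring
  · simp [davenportK, davenportK1, profileB, fromBlocks, Matrix.sum_apply, Matrix.trace,
      Matrix.diag, vecMulVec_apply, dotProduct, crossProduct, Matrix.one_apply,
      Fin.sum_univ_three, mul_add, mul_sub, add_mul, sub_mul, mul_ite, ite_mul, mul_zero,
      zero_mul, Finset.sum_add_distrib, Finset.sum_sub_distrib, Finset.sum_ite_irrel,
      Finset.sum_const_zero, mul_comm, mul_left_comm, mul_assoc, smul_eq_mul]
    apply Finset.sum_congr rfl; intro n _
    fin_cases j <;> simp <;> ring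
  · simp [davenportK, davenportK1, profileB, fromBlocks, Matrix.sum_apply, Matrix.trace,
      Matrix.diag, vecMulVec_apply, dotProduct, crossProduct, Matrix.one_apply,
      Fin.sum_univ_three, mul_add, mul_sub, add_mul, sub_mul, mul_ite, ite_mul, mul_zero,
      zero_mul, Finset.sum_add_distrib, Finset.sum_sub_distrib, Finset.sum_ite_irrel,
      Finset.sum_const_zero, mul_comm, mul_left_comm, mul_assoc, smul_eq_mul]

set_option maxHeartbeats 1000000 in
lemma davenportK1_quad_le (b r : Fin 3 → ℝ) (hb : b ⬝ᵥ b = 1) (hr : r ⬝ᵥ r = 1)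
    (q : Fin 3 ⊕ Unit → ℝ) :
    q ⬝ᵥ (davenportK1 b r).mulVec q ≤ q ⬝ᵥ q := by
  simp [davenportK1, mulVec, dotProduct, cross_apply, Fintype.sum_sum_type,
    Fin.sum_univ_three, fromBlocks_apply₁₁, fromBlocks_apply₁₂, fromBlocks_apply₂₁,
    fromBlocks_apply₂₂, Matrix.of_apply, Matrix.sub_apply, Matrix.add_apply,
    Matrix.smul_apply, Matrix.one_apply, vecMulVec_apply, transpose_apply,
    Finset.univ_unique, Finset.sum_singleton, smul_eq_mul,
    Matrix.cons_val_zero, Matrix.cons_val_one, Matrix.head_cons, Matrix.cons_val_two,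
    Matrix.tail_cons] at *
  set v0 := q (Sum.inl 0); set v1 := q (Sum.inl 1); set v2 := q (Sum.inl 2)
  set s := q (Sum.inr ())
  have e1 : (b 0 * b 0 + b 1 * b 1 + b 2 * b 2) * (v0*v0+v1*v1+v2*v2+s*s)
      = v0*v0+v1*v1+v2*v2+s*s := by rw [hb, one_mul]
  have e2 : (r 0 * r 0 + r 1 * r 1 + r 2 * r 2) * (v0*v0+v1*v1+v2*v2+s*s)
      = v0*v0+v1*v1+v2*v2+s*s := by rw [hr, one_mul]
  linarith [e1, e2,
    sq_nonneg (v0*r 0 + v1*r 1 + v2*r 2 - (b 0*v0 + b 1*v1 + b 2*v2)),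
    sq_nonneg (s*(b 0 - r 0) - (b 1*v2 - b 2*v1) + (v1*r 2 - v2*r 1)),
    sq_nonneg (s*(b 1 - r 1) - (b 2*v0 - b 0*v2) + (v2*r 0 - v0*r 2)),
    sq_nonneg (s*(b 2 - r 2) - (b 0*v1 - b 1*v0) + (v0*r 1 - v1*r 0))]

lemma davenportK_quad_le_gen {N : ℕ} (w : Fin N → ℝ) (hw : ∀ n, 0 ≤ w n)
    (b r : Fin N → Fin 3 → ℝ) (hb : ∀ n, b n ⬝ᵥ b n = 1) (hr : ∀ n, r n ⬝ᵥ r n = 1)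
    (q : Fin 3 ⊕ Unit → ℝ) :
    q ⬝ᵥ (davenportK w b r).mulVec q ≤ (∑ n, w n) * (q ⬝ᵥ q) := by
  rw [davenportK_eq_sum]
  have : q ⬝ᵥ (∑ n, w n • davenportK1 (b n) (r n)).mulVec q
      = ∑ n, w n * (q ⬝ᵥ (davenportK1 (b n) (r n)).mulVec q) := by
    have hsum : (∑ n, w n • davenportK1 (b n) (r n)) *ᵥ q
        = ∑ n, (w n • davenportK1 (b n) (r n)) *ᵥ q := by
      ext i
      simp only [mulVec, dotProduct, Matrix.sum_apply, Finset.sum_apply, Finset.sum_mul]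
      rw [Finset.sum_comm]
    rw [hsum]
    rw [show q ⬝ᵥ (∑ n, (w n • davenportK1 (b n) (r n)) *ᵥ q)
        = ∑ n, q ⬝ᵥ ((w n • davenportK1 (b n) (r n)) *ᵥ q) by
      simp [dotProduct, Finset.mul_sum, Finset.sum_apply]
      rw [Finset.sum_comm, ← Finset.sum_add_distrib]]
    exact Finset.sum_congr rfl fun n _ => by
      rw [Matrix.smul_mulVec, dotProduct_smul, smul_eq_mul]
  rw [this, Finset.sum_mul]
  exact Finset.sum_le_sum fun n _ =>
    mul_le_mul_of_nonneg_left (davenportK1_quad_le (b n) (r n) (hb n) (hr n) q) (hw n)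

/-- For unit vectors `bₙ, rₙ` and nonnegative weights `wₙ`, every unit vector
`q ∈ ℝ⁴` satisfies `qᵀ K q ≤ λ₀ := ∑ wₙ`; in particular every eigenvalue of `K`
(hence the maximum eigenvalue `λₘ`) is at most `λ₀`, so the TASTE statistic
`λ₀ − λₘ` is nonnegative. -/
theorem davenportK_quadForm_le_totalWeight {N : ℕ} (w : Fin N → ℝ) (hw : ∀ n, 0 ≤ w n)
    (b r : Fin N → Fin 3 → ℝ) (hb : ∀ n, b n ⬝ᵥ b n = 1) (hr : ∀ n, r n ⬝ᵥ r n = 1) :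
    (∀ q : Fin 3 ⊕ Unit → ℝ, q ⬝ᵥ q = 1 →
        q ⬝ᵥ (davenportK w b r).mulVec q ≤ ∑ n, w n) ∧
    (∀ (lam : ℝ) (v : Fin 3 ⊕ Unit → ℝ), v ≠ 0 →
        (davenportK w b r).mulVec v = lam • v → lam ≤ ∑ n, w n) := by
  constructor
  · intro q hq
    have := davenportK_quad_le_gen w hw b r hb hr q
    rwa [hq, mul_one] at this
  · intro lam v hv hev
    have hpos : 0 < v ⬝ᵥ v := by
      have h0 : v ⬝ᵥ v ≠ 0 := fun h => hv ((dotProduct_self_eq_zero).mp h)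
      have h1 : 0 ≤ v ⬝ᵥ v := Finset.sum_nonneg fun i _ => mul_self_nonneg _
      exact lt_of_le_of_ne h1 (Ne.symm h0)
    have key : lam * (v ⬝ᵥ v) ≤ (∑ n, w n) * (v ⬝ᵥ v) := by
      have := davenportK_quad_le_gen w hw b r hb hr v
      rwa [hev, dotProduct_smul, smul_eq_mul] at this
    exact le_of_mul_le_mul_right key hpos
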